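/- arXiv:0806.1705 — 2 statements merged into one kernel-verified Lean document; each statement's English description precedes it below -/
import Mathlib

section
/- Let Γ ≤ PSL(2n+1,ℂ) be a Schottky group acting on ℙ^{2n}_ℂ. Then the complement ℙ^{2n}_ℂ \ Ω(Γ) does not contain any projective subspace of dimension ≥ n. -/
open Projectivization Matrix Filter Pointwise
open scoped LinearAlgebra.Projectivization

noncomputable section

/-- Complex projective space `ℙ^{N-1}_ℂ`, as the projectivization of `ℂ^N`. -/
abbrev PV (N : ℕ) := ℙ ℂ (Fin N → ℂ)

instance (N : ℕ) : TopologicalSpace (PV N) :=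
  inferInstanceAs (TopologicalSpace (Quotient _))

/-- The action of `SL(N, ℂ)` on projective space. -/
instance (N : ℕ) : SMul (SpecialLinearGroup (Fin N) ℂ) (PV N) :=
  ⟨fun A => Projectivization.map (SpecialLinearGroup.toLin' A).toLinearMap
      (SpecialLinearGroup.toLin' A).injective⟩

theorem SL_smul_mk {N : ℕ} (A : SpecialLinearGroup (Fin N) ℂ) (v : Fin N → ℂ) (hv : v ≠ 0) :
    A • Projectivization.mk ℂ v hv =
      Projectivization.mk ℂ (SpecialLinearGroup.toLin' A v)
        (by simpa using (SpecialLinearGroup.toLin' A).map_ne_zero_iff.mpr hv) :=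
  Projectivization.map_mk _ _ v hv

instance (N : ℕ) : MulAction (SpecialLinearGroup (Fin N) ℂ) (PV N) where
  one_smul x := by
    induction x using Projectivization.ind with
    | h v hv => rw [SL_smul_mk]; simp
  mul_smul A B x := by
    induction x using Projectivization.ind with
    | h v hv =>
      rw [SL_smul_mk, SL_smul_mk, SL_smul_mk]
      simp only [_root_.map_mul]
      rfl

theorem center_smul_eq {N : ℕ} {C : SpecialLinearGroup (Fin N) ℂ}
    (hC : C ∈ Subgroup.center (SpecialLinearGroup (Fin N) ℂ)) (x : PV N) : C • x = x := by
  obtain ⟨r, hrN, hr⟩ := Matrix.SpecialLinearGroup.mem_center_iff.mp hC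
  induction x using Projectivization.ind with
  | h v hv =>
    rcases Nat.eq_zero_or_pos N with hN | hN
    · subst hN
      exact absurd (Subsingleton.elim v 0) hv
    have hr0 : r ≠ 0 := by
      intro h0
      rw [h0, zero_pow (by simpa using hN.ne')] at hrN
      exact zero_ne_one hrN
    rw [SL_smul_mk]
    symm
    rw [Projectivization.mk_eq_mk_iff']
    refine ⟨r⁻¹, ?_⟩
    have hCv : SpecialLinearGroup.toLin' C v = r • v := by
      rw [SpecialLinearGroup.toLin'_apply, Matrix.toLin'_apply, ← hr]
      ext i
      simp [Matrix.mulVec, dotProduct, Matrix.scalar_apply, Matrix.diagonal,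
        Finset.sum_ite_eq]
    rw [hCv, smul_smul, inv_mul_cancel₀ hr0, one_smul]

/-- The projective special linear group `PSL(N, ℂ)`. -/
abbrev PSL (N : ℕ) :=
  SpecialLinearGroup (Fin N) ℂ ⧸ Subgroup.center (SpecialLinearGroup (Fin N) ℂ)

instance (N : ℕ) : SMul (PSL N) (PV N) :=
  ⟨fun g x => Quotient.liftOn' g (fun A => A • x) (by
    intro A B h
    rw [QuotientGroup.leftRel_apply] at h
    try simp only
    have hB : B = A * (A⁻¹ * B) := by group
    rw [hB, mul_smul, center_smul_eq h])⟩

theorem PSL_mk_smul {N : ℕ} (A : SpecialLinearGroup (Fin N) ℂ) (x : PV N) :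
    (QuotientGroup.mk A : PSL N) • x = A • x := rfl

instance (N : ℕ) : MulAction (PSL N) (PV N) where
  one_smul x := by
    rw [show (1 : PSL N) = QuotientGroup.mk 1 from rfl, PSL_mk_smul, one_smul]
  mul_smul g h x := by
    induction g using QuotientGroup.induction_on with
    | H A =>
      induction h using QuotientGroup.induction_on with
      | H B =>
        rw [show (QuotientGroup.mk A * QuotientGroup.mk B : PSL N) = QuotientGroup.mk (A * B)
          from rfl, PSL_mk_smul, PSL_mk_smul, PSL_mk_smul, mul_smul]

/-- The data of a Schottky group in `PSL(N, ℂ)` acting on `ℙ^{N-1}_ℂ`: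
`2g` open sets (`g ≥ 2`), each equal to the interior of its closure, with pairwise
disjoint closures, together with `g` generators `γ_j` satisfying
`γ_j (R_j) = ℙ^{N-1}_ℂ \ closure (S_j)`. -/
structure SchottkyData (N g : ℕ) where
  hg : 2 ≤ g
  R : Fin g → Set (PV N)
  S : Fin g → Set (PV N)
  gen : Fin g → PSL N
  Ropen : ∀ j, IsOpen (R j)
  Sopen : ∀ j, IsOpen (S j)
  Rreg : ∀ j, interior (closure (R j)) = R j
  Sreg : ∀ j, interior (closure (S j)) = S j
  disj : Pairwise (Function.onFun Disjoint
    (Sum.elim (fun j => closure (R j)) (fun j => closure (S j)) : Fin g ⊕ Fin g → Set (PV N)))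
  pair : ∀ j, gen j • R j = (closure (S j))ᶜ

namespace SchottkyData

variable {N g : ℕ}

/-- The Schottky group itself: the subgroup generated by the Schottky generators. -/
def Γ (D : SchottkyData N g) : Subgroup (PSL N) := Subgroup.closure (Set.range D.gen)

/-- The fundamental region `F(Γ) = ℙ^{N-1}_ℂ \ ⋃ⱼ (Rⱼ ∪ Sⱼ)`. -/
def F (D : SchottkyData N g) : Set (PV N) := (⋃ j, D.R j ∪ D.S j)ᶜ

/-- The region `Ω(Γ) = ⋃_{γ ∈ Γ} γ (F(Γ))`. -/
def Ω (D : SchottkyData N g) : Set (PV N) := ⋃ γ ∈ D.Γ, γ • D.F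

end SchottkyData


section Helpers

open Projectivization

/-- Membership of the representative in a submodule only depends on the projective point. -/
lemma PV_rep_mem_iff {N : ℕ} (W : Submodule ℂ (Fin N → ℂ)) (v : Fin N → ℂ) (hv : v ≠ 0) :
    (Projectivization.mk ℂ v hv).rep ∈ W ↔ v ∈ W := by
  obtain ⟨a, ha⟩ := Projectivization.exists_smul_eq_mk_rep ℂ v hv
  rw [← ha, Units.smul_def, Submodule.smul_mem_iff _ a.ne_zero]

lemma continuous_PV_mk {N : ℕ} {α : Type*} [TopologicalSpace α] (f : α → Fin N → ℂ)
    (hf : Continuous f) (h : ∀ a, f a ≠ 0) :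
    Continuous (fun a => Projectivization.mk ℂ (f a) (h a)) :=
  continuous_quotient_mk'.comp (Continuous.subtype_mk hf h)

/-- The projectivization of a linear subspace is preconnected. -/
lemma isPreconnected_PV {N : ℕ} (W : Submodule ℂ (Fin N → ℂ)) :
    IsPreconnected {x : PV N | x.rep ∈ W} := by
  rcases Set.eq_empty_or_nonempty {x : PV N | x.rep ∈ W} with h | ⟨x₀, hx₀⟩
  · rw [h]; exact isPreconnected_empty
  · apply isPreconnected_of_forall x₀
    intro y hy
    have hvW : x₀.rep ∈ W := hx₀
    have hwW : y.rep ∈ W := hy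
    set v := x₀.rep with hvdef
    set w := y.rep with hwdef
    have hv0 : v ≠ 0 := x₀.rep_nonzero
    have hw0 : w ≠ 0 := y.rep_nonzero
    by_cases hdep : ∃ a : ℂ, a • v = w
    · have hyx : y = x₀ := by
        rw [← Projectivization.mk_rep x₀, ← Projectivization.mk_rep y]
        rw [Projectivization.mk_eq_mk_iff']
        exact hdep
      exact ⟨{x₀}, Set.singleton_subset_iff.mpr hx₀, rfl, by rw [hyx]; rfl,
        isPreconnected_singleton⟩
    · have hne : ∀ t : ℝ, (1 - (t : ℂ)) • v + (t : ℂ) • w ≠ 0 := by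
        intro t ht
        apply hdep
        by_cases h0 : (t : ℂ) = 0
        · rw [h0] at ht
          simp only [sub_zero, one_smul, zero_smul, add_zero] at ht
          exact absurd ht hv0
        · refine ⟨(t : ℂ)⁻¹ * (-(1 - (t : ℂ))), ?_⟩
          have h1 : (t : ℂ) • w = -((1 - (t : ℂ)) • v) := by
            rw [eq_neg_iff_add_eq_zero, add_comm]; exact ht
          have h2 : w = (t : ℂ)⁻¹ • ((t : ℂ) • w) := by
            rw [smul_smul, inv_mul_cancel₀ h0, one_smul]
          rw [h2, h1]
          module
      set f : ℝ → PV N := fun t => Projectivization.mk ℂ ((1 - (t : ℂ)) • v + (t : ℂ) • w)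
        (hne t) with hfdef
      have hf : Continuous f :=
        continuous_PV_mk _ (by continuity) hne
      refine ⟨Set.range f, ?_, ?_, ?_, ?_⟩
      · rintro _ ⟨t, rfl⟩
        simp only [Set.mem_setOf_eq, hfdef]
        rw [PV_rep_mem_iff]
        exact W.add_mem (W.smul_mem _ hvW) (W.smul_mem _ hwW)
      · refine ⟨0, ?_⟩
        have : f 0 = Projectivization.mk ℂ v hv0 := by
          rw [hfdef]
          simp only [Projectivization.mk_eq_mk_iff']
          exact ⟨1, by push_cast; simp⟩
        rw [this]; exact Projectivization.mk_rep x₀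
      · refine ⟨1, ?_⟩
        have : f 1 = Projectivization.mk ℂ w hw0 := by
          rw [hfdef]
          simp only [Projectivization.mk_eq_mk_iff']
          exact ⟨1, by push_cast; simp⟩
        rw [this]; exact Projectivization.mk_rep y
      · rw [← Set.image_univ]
        exact isPreconnected_univ.image f hf.continuousOn

end Helpers

/-- If `Γ ≤ PSL(2n+1, ℂ)` is a Schottky group acting on `ℙ^{2n}_ℂ`, then the complement
`ℙ^{2n}_ℂ \ Ω(Γ)` contains no projective subspace of (projective) dimension `≥ n`, i.e. no
projectivization of a linear subspace `W ⊆ ℂ^{2n+1}` with `dim W ≥ n + 1`. -/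
theorem schottky_complement_no_large_subspace (n g : ℕ) (D : SchottkyData (2 * n + 1) g) :
    ¬ ∃ W : Submodule ℂ (Fin (2 * n + 1) → ℂ),
        n + 1 ≤ Module.finrank ℂ W ∧
        {x : PV (2 * n + 1) | x.rep ∈ W} ⊆ D.Ωᶜ := by
  rintro ⟨W, hW, hWsub⟩
  classical
  set P : Set (PV (2 * n + 1)) := {x | x.rep ∈ W} with hPdef
  -- The fundamental domain is contained in Ω.
  have hFΩ : D.F ⊆ D.Ω := by
    intro x hx
    refine Set.mem_iUnion.mpr ⟨1, Set.mem_iUnion.mpr ⟨D.Γ.one_mem, ?_⟩⟩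
    rwa [one_smul]
  -- The pieces R_j, S_j, indexed by `Fin g ⊕ Fin g`.
  set piece : Fin g ⊕ Fin g → Set (PV (2 * n + 1)) := Sum.elim D.R D.S with hpiecedef
  have hclo : ∀ i, closure (piece i) =
      (Sum.elim (fun j => closure (D.R j)) (fun j => closure (D.S j)) :
        Fin g ⊕ Fin g → Set (PV (2 * n + 1))) i := by
    rintro (j | j) <;> rfl
  have hdisj : ∀ i i' : Fin g ⊕ Fin g, i ≠ i' →
      Disjoint (closure (piece i)) (closure (piece i')) := by
    intro i i' h
    rw [hclo, hclo]
    exact D.disj h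
  have hopen : ∀ i, IsOpen (piece i) := by
    rintro (j | j)
    exacts [D.Ropen j, D.Sopen j]
  -- P is contained in the union of the pieces.
  have hPU : P ⊆ ⋃ i, piece i := by
    intro x hx
    have hxF : x ∉ D.F := fun hF => (hWsub hx) (hFΩ hF)
    have : x ∈ ⋃ j, D.R j ∪ D.S j := by
      by_contra h
      exact hxF h
    obtain ⟨j, hj⟩ := Set.mem_iUnion.mp this
    rcases hj with hj | hj
    · exact Set.mem_iUnion.mpr ⟨Sum.inl j, hj⟩
    · exact Set.mem_iUnion.mpr ⟨Sum.inr j, hj⟩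
  -- P is nonempty.
  have hWbot : W ≠ ⊥ := by
    intro h
    rw [h, finrank_bot] at hW
    omega
  obtain ⟨v₀, hv₀W, hv₀⟩ := Submodule.exists_mem_ne_zero_of_ne_bot hWbot
  have hx₀P : Projectivization.mk ℂ v₀ hv₀ ∈ P := by
    rw [hPdef, Set.mem_setOf_eq, PV_rep_mem_iff]
    exact hv₀W
  -- Hence P lies in a single piece.
  obtain ⟨i₀, hi₀⟩ := Set.mem_iUnion.mp (hPU hx₀P)
  have hPpiece : P ⊆ piece i₀ := by
    refine (isPreconnected_PV W).subset_left_of_subset_union (hopen i₀)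
      (isOpen_iUnion fun i : {i // i ≠ i₀} => hopen i.1) ?_ ?_
      ⟨Projectivization.mk ℂ v₀ hv₀, hx₀P, hi₀⟩
    · rw [Set.disjoint_iUnion_right]
      intro i
      exact ((hdisj i₀ i.1 (Ne.symm i.2)).mono subset_closure subset_closure)
    · intro x hx
      obtain ⟨i, hi⟩ := Set.mem_iUnion.mp (hPU hx)
      by_cases h : i = i₀
      · exact Or.inl (h ▸ hi)
      · exact Or.inr (Set.mem_iUnion.mpr ⟨⟨i, h⟩, hi⟩)
  -- Pick an index k different from the index of the piece containing P.
  haveI : Nontrivial (Fin g) := by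
    have hg := D.hg
    obtain ⟨m, rfl⟩ : ∃ m, g = m + 2 := ⟨g - 2, by omega⟩
    infer_instance
  obtain ⟨k, hi₀l, hi₀r⟩ : ∃ k : Fin g, i₀ ≠ Sum.inl k ∧ i₀ ≠ Sum.inr k := by
    rcases i₀ with j | j <;> obtain ⟨k, hk⟩ := exists_ne j
    · exact ⟨k, fun h => hk (Sum.inl.inj h).symm, Sum.inl_ne_inr⟩
    · exact ⟨k, Sum.inr_ne_inl, fun h => hk (Sum.inr.inj h).symm⟩
  -- The piece containing P is disjoint from R k and from closure (S k).
  have hRk : Disjoint (piece i₀) (D.R k) :=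
    (hdisj i₀ (Sum.inl k) hi₀l).mono subset_closure subset_closure
  have hSk : Disjoint (piece i₀) (closure (D.S k)) :=
    (hdisj i₀ (Sum.inr k) hi₀r).mono subset_closure le_rfl
  -- Ping-pong: gen k maps the complement of R k into closure (S k).
  have hpp : ∀ x : PV (2 * n + 1), x ∉ D.R k → D.gen k • x ∈ closure (D.S k) := by
    intro x hx
    by_contra h
    have hmem : D.gen k • x ∈ D.gen k • D.R k := by
      rw [D.pair k]
      exact h
    obtain ⟨y, hy, hyx⟩ := hmem
    exact hx ((MulAction.injective (D.gen k) hyx) ▸ hy)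
  -- Lift gen k to SL.
  obtain ⟨A, hA⟩ := QuotientGroup.mk_surjective (D.gen k)
  set e := SpecialLinearGroup.toLin' A with hedef
  set W' : Submodule ℂ (Fin (2 * n + 1) → ℂ) := W.map e.toLinearMap with hW'def
  have hW' : Module.finrank ℂ W' = Module.finrank ℂ W := LinearEquiv.finrank_map_eq e W
  -- Dimension count: W ∩ W' is nonzero.
  have hsum := Submodule.finrank_sup_add_finrank_inf_eq W W'
  have hle : Module.finrank ℂ (W ⊔ W' : Submodule ℂ (Fin (2 * n + 1) → ℂ)) ≤ 2 * n + 1 := by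
    have h1 := Submodule.finrank_le (W ⊔ W' : Submodule ℂ (Fin (2 * n + 1) → ℂ))
    rwa [Module.finrank_fin_fun] at h1
  have hinf : 1 ≤ Module.finrank ℂ (W ⊓ W' : Submodule ℂ (Fin (2 * n + 1) → ℂ)) := by omega
  have hinfbot : (W ⊓ W' : Submodule ℂ (Fin (2 * n + 1) → ℂ)) ≠ ⊥ := by
    intro h
    rw [h, finrank_bot] at hinf
    omega
  obtain ⟨v, hv, hvne⟩ := Submodule.exists_mem_ne_zero_of_ne_bot hinfbot
  -- The point z = mk v lies in P and in (gen k) • P.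
  set z : PV (2 * n + 1) := Projectivization.mk ℂ v hvne with hzdef
  have hzP : z ∈ P := by
    rw [hPdef, Set.mem_setOf_eq, hzdef, PV_rep_mem_iff]
    exact hv.1
  obtain ⟨u, huW, hu⟩ := Submodule.mem_map.mp hv.2
  have hu0 : u ≠ 0 := by
    intro h
    rw [h, map_zero] at hu
    exact hvne hu.symm
  have huP : Projectivization.mk ℂ u hu0 ∈ P := by
    rw [hPdef, Set.mem_setOf_eq, PV_rep_mem_iff]
    exact huW
  have hz : z = D.gen k • Projectivization.mk ℂ u hu0 := by
    rw [← hA, PSL_mk_smul, SL_smul_mk, hzdef, Projectivization.mk_eq_mk_iff']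
    exact ⟨1, by rw [one_smul]; exact hu⟩
  have huRk : Projectivization.mk ℂ u hu0 ∉ D.R k :=
    fun h => (hRk.ne_of_mem (hPpiece huP) h) rfl
  have hzS : z ∈ closure (D.S k) := by
    rw [hz]
    exact hpp _ huRk
  exact (hSk.ne_of_mem (hPpiece hzP) hzS) rfl
end
end

section
/- Let γ ∈ PSL(n+1,ℂ) with a lift γ̃ whose eigenvalue absolute values are r_1 < r_2 < … < r_k, giving a decomposition ℂ^{n+1} = V_1 ⊕ … ⊕ V_k where γ̃ restricted to V_j equals r_j γ_j with γ_j having unitary eigenvalues. Then for any [v] ∈ ℙ^n_ℂ with v = Σ v_j, v_j ∈ V_j, and j_0 = max{j : v_j ≠ 0}, every cluster point of {γ^m([v])}_{m∈ℕ} lies in the projectivization of Eve(γ_{j_0}) \ {0}. -/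
open Projectivization Matrix Filter Pointwise
open scoped LinearAlgebra.Projectivization

noncomputable section

section AuxiliaryLemmas

open Filter Metric Topology Module


/-- Ratio of binomial coefficients tends to zero. -/
lemma tendsto_choose_div_choose {d D : ℕ} (h : d < D) :
    Tendsto (fun m : ℕ => (m.choose d : ℝ) / (m.choose D)) atTop (𝓝 0) := by
  apply squeeze_zero' (g := fun m : ℕ => ((D.factorial : ℝ) * 2 ^ D) / m)
  · filter_upwards [eventually_ge_atTop 1] with m hm
    positivity
  · filter_upwards [eventually_ge_atTop (2 * D + 2)] with m hm
    have hmD : D ≤ m := by omega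
    have hm1 : (1 : ℝ) ≤ (m : ℝ) := by exact_mod_cast Nat.one_le_iff_ne_zero.mpr (by omega)
    have hmpos : (0 : ℝ) < (m : ℝ) := by linarith
    have hcD : (0 : ℝ) < (m.choose D : ℝ) := by exact_mod_cast Nat.choose_pos hmD
    rw [div_le_div_iff₀ hcD hmpos]
    have hcast : ((m + 1 - D : ℕ) : ℝ) = (m : ℝ) + 1 - D := by
      have : D ≤ m + 1 := by omega
      push_cast [Nat.cast_sub this]
      ring
    calc (m.choose d : ℝ) * m ≤ (m : ℝ) ^ d * m := by
          have : (m.choose d : ℝ) ≤ (m : ℝ) ^ d := by exact_mod_cast Nat.choose_le_pow m d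
          exact mul_le_mul_of_nonneg_right this (by positivity)
      _ = (m : ℝ) ^ (d + 1) := (pow_succ _ _).symm
      _ ≤ (m : ℝ) ^ D := pow_le_pow_right₀ hm1 (by omega)
      _ ≤ (2 * ((m + 1 - D : ℕ) : ℝ)) ^ D := by
          apply pow_le_pow_left₀ (by positivity)
          rw [hcast]
          push_cast
          linarith [show (D : ℝ) ≤ m / 2 by
            rw [le_div_iff₀ (by norm_num : (0:ℝ) < 2)]
            exact_mod_cast (by omega : D * 2 ≤ m)]
      _ = 2 ^ D * ((m + 1 - D : ℕ) : ℝ) ^ D := mul_pow _ _ _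
      _ ≤ 2 ^ D * ((D.factorial : ℝ) * (m.choose D)) := by
          apply mul_le_mul_of_nonneg_left _ (by positivity)
          have := Nat.pow_le_choose (α := ℝ) D m
          rw [div_le_iff₀ (by positivity : (0:ℝ) < (D.factorial : ℝ))] at this
          linarith
      _ = (D.factorial : ℝ) * 2 ^ D * (m.choose D) := by ring
  · exact tendsto_const_div_atTop_nhds_zero_nat _

/-- Mixed ratio with smaller base tends to zero. -/
lemma tendsto_mixed_ratio {d D : ℕ} {ρ Rr : ℝ} (hρ : 0 < ρ) (hR : ρ < Rr) :
    Tendsto (fun m : ℕ => (m.choose d : ℝ) * ρ ^ (m - d) / ((m.choose D : ℝ) * Rr ^ (m - D)))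
      atTop (𝓝 0) := by
  have h0R : (0 : ℝ) < Rr := hρ.trans hR
  have hlim : Tendsto (fun m : ℕ => (Rr ^ D / ρ ^ d) * ((m : ℝ) ^ d * (ρ / Rr) ^ m))
      atTop (𝓝 0) := by
    have h1 := tendsto_pow_const_mul_const_pow_of_lt_one d
      (le_of_lt (div_pos hρ h0R)) ((div_lt_one h0R).2 hR)
    simpa using h1.const_mul (Rr ^ D / ρ ^ d)
  apply squeeze_zero' _ _ hlim
  · filter_upwards [eventually_ge_atTop (max d D)] with m hm
    positivity
  · filter_upwards [eventually_ge_atTop (max d D)] with m hm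
    have hmd : d ≤ m := le_of_max_le_left hm
    have hmD : D ≤ m := le_of_max_le_right hm
    have hcD : (1 : ℝ) ≤ (m.choose D : ℝ) := by exact_mod_cast Nat.choose_pos hmD
    have key : (Rr ^ D / ρ ^ d) * ((m : ℝ) ^ d * (ρ / Rr) ^ m) * ((m.choose D : ℝ) * Rr ^ (m - D))
        = (m.choose D : ℝ) * ((m : ℝ) ^ d * ρ ^ (m - d)) := by
      rw [div_pow, pow_sub₀ _ (ne_of_gt h0R) hmD, pow_sub₀ _ (ne_of_gt hρ) hmd]
      field_simp
    rw [div_le_iff₀ (by positivity), key]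
    have h1 : (m.choose d : ℝ) ≤ (m : ℝ) ^ d := by exact_mod_cast Nat.choose_le_pow m d
    have h2 : (0 : ℝ) ≤ ρ ^ (m - d) := by positivity
    calc (m.choose d : ℝ) * ρ ^ (m - d) ≤ (m : ℝ) ^ d * ρ ^ (m - d) :=
          mul_le_mul_of_nonneg_right h1 h2
      _ ≤ (m.choose D : ℝ) * ((m : ℝ) ^ d * ρ ^ (m - d)) := le_mul_of_one_le_left (by positivity) hcD

variable {M : Type*} [AddCommGroup M] [Module ℂ M]

/-- Coercion of powers of the restricted shifted operator. -/
lemma restrict_sub_smul_pow_coe (T : M →ₗ[ℂ] M) (W : Submodule ℂ M)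
    (hW : ∀ x ∈ W, T x ∈ W) (μ : ℂ) (q : ℕ) :
    ∀ x : W, ((((T.restrict hW - μ • (1 : Module.End ℂ W)) ^ q) x : W) : M)
      = ((T - μ • (1 : Module.End ℂ M)) ^ q) (x : M) := by
  have hstep : ∀ y : W, (((T.restrict hW - μ • (1 : Module.End ℂ W)) y : W) : M)
      = (T - μ • (1 : Module.End ℂ M)) (y : M) := by
    intro y
    simp [LinearMap.sub_apply, LinearMap.smul_apply, Module.End.one_apply,
      LinearMap.restrict_apply]
  induction q with
  | zero => intro x; simp
  | succ q ih =>
    intro x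
    rw [pow_succ, pow_succ, Module.End.mul_apply, Module.End.mul_apply, ih, hstep]

/-- Invariance of a submodule under powers of the shifted operator. -/
lemma sub_smul_pow_mem (T : M →ₗ[ℂ] M) (W : Submodule ℂ M)
    (hW : ∀ x ∈ W, T x ∈ W) (μ : ℂ) (q : ℕ) {x : M} (hx : x ∈ W) :
    ((T - μ • (1 : Module.End ℂ M)) ^ q) x ∈ W := by
  induction q with
  | zero => simpa using hx
  | succ q ih =>
    rw [pow_succ', Module.End.mul_apply]
    have h1 := ih
    have : (T - μ • (1 : Module.End ℂ M)) (((T - μ • (1 : Module.End ℂ M)) ^ q) x)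
        = T (((T - μ • (1 : Module.End ℂ M)) ^ q) x)
          - μ • (((T - μ • (1 : Module.End ℂ M)) ^ q) x) := by
      simp [LinearMap.sub_apply, LinearMap.smul_apply, Module.End.one_apply]
    rw [this]
    exact Submodule.sub_mem _ (hW _ h1) (Submodule.smul_mem _ _ h1)

/-- Binomial expansion for powers of an endomorphism applied to a generalized eigenvector. -/
lemma pow_apply_binomial (T : Module.End ℂ M) (μ : ℂ) (x : M) (κ m : ℕ) (hκ : κ ≤ m)
    (hnil : ((T - μ • (1 : Module.End ℂ M)) ^ κ) x = 0) :
    (T ^ m) x = ∑ d ∈ Finset.range κ,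
      ((m.choose d : ℂ) * μ ^ (m - d)) • (((T - μ • (1 : Module.End ℂ M)) ^ d) x) := by
  have hcomm : Commute (T - μ • (1 : Module.End ℂ M)) (μ • (1 : Module.End ℂ M)) := by
    show _ * _ = _ * _
    rw [mul_smul_comm, smul_mul_assoc, mul_one, one_mul]
  have expand := hcomm.add_pow m
  have hT : T ^ m = ((T - μ • (1 : Module.End ℂ M)) + μ • 1) ^ m := by rw [sub_add_cancel]
  rw [hT, expand]
  have hterm : ∀ d : ℕ, d ≤ m →
      ((T - μ • (1 : Module.End ℂ M)) ^ d * (μ • (1 : Module.End ℂ M)) ^ (m - d)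
        * (m.choose d : Module.End ℂ M)) x
      = ((m.choose d : ℂ) * μ ^ (m - d)) • (((T - μ • (1 : Module.End ℂ M)) ^ d) x) := by
    intro d _
    rw [Module.End.mul_apply, Module.End.mul_apply, Module.End.natCast_apply]
    rw [smul_pow, one_pow, LinearMap.smul_apply, Module.End.one_apply]
    rw [_root_.map_smul, map_nsmul]
    rw [mul_smul]
    rw [Nat.cast_smul_eq_nsmul ℂ]
    rw [smul_comm]
  rw [LinearMap.sum_apply]
  rw [Finset.sum_congr rfl (fun d hd => hterm d (by
    simp only [Finset.mem_range] at hd; omega))]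
  symm
  apply Finset.sum_subset (Finset.range_subset_range.mpr (by omega))
  intro d hd hdk
  simp only [Finset.mem_range] at hd hdk
  have hκd : κ ≤ d := by omega
  have hzero : ((T - μ • (1 : Module.End ℂ M)) ^ d) x = 0 := by
    rw [show d = (d - κ) + κ by omega, pow_add, Module.End.mul_apply, hnil, map_zero]
  rw [hzero, smul_zero]


theorem continuous_PVmk' (N : ℕ) :
    Continuous (Projectivization.mk' ℂ : {v : Fin N → ℂ // v ≠ 0} → PV N) :=
  continuous_quotient_mk'

theorem isQuotientMap_PVmk' (N : ℕ) :
    Topology.IsQuotientMap (Projectivization.mk' ℂ : {v : Fin N → ℂ // v ≠ 0} → PV N) :=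
  isQuotientMap_quotient_mk'

theorem isOpenMap_PVmk' (N : ℕ) :
    IsOpenMap (Projectivization.mk' ℂ : {v : Fin N → ℂ // v ≠ 0} → PV N) := by
  intro U hU
  rw [← (isQuotientMap_PVmk' N).isOpen_preimage]
  have heq : (Projectivization.mk' ℂ) ⁻¹' ((Projectivization.mk' ℂ) '' U)
      = ⋃ c : ℂˣ, (fun x : {v : Fin N → ℂ // v ≠ 0} =>
          (⟨(c : ℂ) • (x : Fin N → ℂ), smul_ne_zero (Units.ne_zero c) x.2⟩
            : {v : Fin N → ℂ // v ≠ 0})) ⁻¹' U := by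
    ext y
    simp only [Set.mem_preimage, Set.mem_image, Set.mem_iUnion]
    constructor
    · rintro ⟨x, hxU, hxy⟩
      rw [Projectivization.mk'_eq_mk, Projectivization.mk'_eq_mk,
        Projectivization.mk_eq_mk_iff] at hxy
      obtain ⟨a, ha⟩ := hxy
      refine ⟨a, ?_⟩
      have hx : (⟨(a : ℂ) • (y : Fin N → ℂ),
          smul_ne_zero (Units.ne_zero a) y.2⟩ : {v : Fin N → ℂ // v ≠ 0}) = x :=
        Subtype.ext (by rw [← ha]; rfl)
      rwa [hx]
    · rintro ⟨c, hc⟩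
      refine ⟨_, hc, ?_⟩
      rw [Projectivization.mk'_eq_mk, Projectivization.mk'_eq_mk, Projectivization.mk_eq_mk_iff]
      exact ⟨c, rfl⟩
  rw [heq]
  apply isOpen_iUnion
  intro c
  exact ((((continuous_const : Continuous fun _ : {v : Fin N → ℂ // v ≠ 0} => (c : ℂ)).smul continuous_subtype_val).subtype_mk _)).isOpen_preimage U hU

instance PV_t2 (N : ℕ) : T2Space (PV N) := by
  rw [t2_iff_isClosed_diagonal]
  have hrel : IsClosed {z : ({v : Fin N → ℂ // v ≠ 0}) × ({v : Fin N → ℂ // v ≠ 0}) |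
      Projectivization.mk' ℂ z.1 = Projectivization.mk' ℂ z.2} := by
    have heq : {z : ({v : Fin N → ℂ // v ≠ 0}) × ({v : Fin N → ℂ // v ≠ 0}) |
        Projectivization.mk' ℂ z.1 = Projectivization.mk' ℂ z.2}
        = ⋂ (i : Fin N) (j : Fin N),
          {z : ({v : Fin N → ℂ // v ≠ 0}) × ({v : Fin N → ℂ // v ≠ 0}) |
            (z.1 : Fin N → ℂ) i * (z.2 : Fin N → ℂ) j
              = (z.1 : Fin N → ℂ) j * (z.2 : Fin N → ℂ) i} := by
      ext z
      simp only [Set.mem_setOf_eq, Set.mem_iInter]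
      constructor
      · intro h i j
        rw [Projectivization.mk'_eq_mk, Projectivization.mk'_eq_mk,
          Projectivization.mk_eq_mk_iff'] at h
        obtain ⟨a, ha⟩ := h
        rw [← ha]
        simp only [Pi.smul_apply, smul_eq_mul]
        ring
      · intro h
        rw [Projectivization.mk'_eq_mk, Projectivization.mk'_eq_mk,
          Projectivization.mk_eq_mk_iff']
        obtain ⟨i₀, hi₀⟩ : ∃ i, (z.2 : Fin N → ℂ) i ≠ 0 := by
          by_contra hall
          push_neg at hall
          exact z.2.2 (funext hall)
        refine ⟨(z.1 : Fin N → ℂ) i₀ / (z.2 : Fin N → ℂ) i₀, funext fun j => ?_⟩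
        have hij := h i₀ j
        simp only [Pi.smul_apply, smul_eq_mul]
        field_simp
        linear_combination hij
    rw [heq]
    apply isClosed_iInter; intro i
    apply isClosed_iInter; intro j
    apply isClosed_eq
    · exact ((continuous_apply i).comp (continuous_subtype_val.comp continuous_fst)).mul
        ((continuous_apply j).comp (continuous_subtype_val.comp continuous_snd))
    · exact ((continuous_apply j).comp (continuous_subtype_val.comp continuous_fst)).mul
        ((continuous_apply i).comp (continuous_subtype_val.comp continuous_snd))
  rw [← isOpen_compl_iff]
  have himg : (Set.diagonal (PV N))ᶜ = (Prod.map (Projectivization.mk' ℂ) (Projectivization.mk' ℂ))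
      '' {z : ({v : Fin N → ℂ // v ≠ 0}) × ({v : Fin N → ℂ // v ≠ 0}) |
        Projectivization.mk' ℂ z.1 = Projectivization.mk' ℂ z.2}ᶜ := by
    ext q
    constructor
    · intro hq
      obtain ⟨x₁, hx₁⟩ := (isQuotientMap_PVmk' N).surjective q.1
      obtain ⟨x₂, hx₂⟩ := (isQuotientMap_PVmk' N).surjective q.2
      refine ⟨(x₁, x₂), ?_, ?_⟩
      · intro hmem
        apply hq
        simp only [Set.mem_setOf_eq] at hmem
        show q.1 = q.2
        rw [← hx₁, ← hx₂, hmem]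
      · show (Projectivization.mk' ℂ x₁, Projectivization.mk' ℂ x₂) = q
        rw [hx₁, hx₂]
    · rintro ⟨zz, hzz, rfl⟩
      intro hdiag
      exact hzz hdiag
  rw [himg]
  exact ((isOpenMap_PVmk' N).prodMap (isOpenMap_PVmk' N)) _ hrel.isOpen_compl


set_option maxHeartbeats 1600000 in
theorem core_infDist (n k : ℕ) (T : (Fin (n + 1) → ℂ) →ₗ[ℂ] (Fin (n + 1) → ℂ))
    (r : Fin k → ℝ) (hrpos : ∀ j, 0 < r j) (hrmono : StrictMono r)
    (V : Fin k → Submodule ℂ (Fin (n + 1) → ℂ))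
    (hinv : ∀ j, ∀ x ∈ V j, T x ∈ V j)
    (heig : ∀ j (μ : ℂ), Module.End.HasEigenvalue (T.restrict (hinv j)) μ → ‖μ‖ = r j)
    (v : Fin (n + 1) → ℂ) (w : Fin k → Fin (n + 1) → ℂ)
    (hw : ∀ j, w j ∈ V j) (hsum : v = ∑ j, w j)
    (j₀ : Fin k) (hj₀ : w j₀ ≠ 0) (hmax : ∀ j, j₀ < j → w j = 0) :
    Tendsto (fun m : ℕ => Metric.infDist (((‖(T ^ m) v‖ : ℝ) : ℂ)⁻¹ • ((T ^ m) v))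
      ((Submodule.span ℂ {u : Fin (n + 1) → ℂ | u ∈ V j₀ ∧ ∃ μ : ℂ,
        Module.End.HasEigenvector T μ u} : Submodule ℂ (Fin (n + 1) → ℂ)) : Set (Fin (n + 1) → ℂ)))
      atTop (𝓝 0) := by
  classical
  set S : Submodule ℂ (Fin (n + 1) → ℂ) := Submodule.span ℂ {u : Fin (n + 1) → ℂ | u ∈ V j₀ ∧
    ∃ μ : ℂ, Module.End.HasEigenvector T μ u} with hSdef
  -- Step 1: decomposition of each w j into generalized eigenvectors
  have hdec : ∀ j : Fin k, ∃ (M : Finset ℂ) (a : ℂ → (Fin (n + 1) → ℂ)),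
      (∀ μ ∈ M, a μ ≠ 0 ∧ a μ ∈ V j ∧ ‖μ‖ = r j ∧
        ((T - μ • (1 : Module.End ℂ (Fin (n + 1) → ℂ))) ^ (n + 1)) (a μ) = 0)
      ∧ w j = ∑ μ ∈ M, a μ ∧ (w j = 0 → M = ∅) := by
    intro j
    by_cases hwj : w j = 0
    · exact ⟨∅, fun _ => 0, by simp, by simp [hwj], fun _ => rfl⟩
    · set f : Module.End ℂ (V j) := T.restrict (hinv j) with hf
      have hmem : (⟨w j, hw j⟩ : V j) ∈ ⨆ μ : ℂ, f.maxGenEigenspace μ := by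
        rw [Module.End.iSup_maxGenEigenspace_eq_top]; trivial
      rw [Submodule.mem_iSup_iff_exists_finsupp] at hmem
      obtain ⟨c, hc, hcsum⟩ := hmem
      refine ⟨c.support, fun μ => ((c μ : V j) : Fin (n + 1) → ℂ), ?_, ?_, fun h => absurd h hwj⟩
      · intro μ hμ
        have hne : c μ ≠ 0 := Finsupp.mem_support_iff.mp hμ
        have hμmem := hc μ
        have hne' : ((c μ : V j) : Fin (n + 1) → ℂ) ≠ 0 := by
          simpa [Submodule.coe_eq_zero] using hne
        -- nilpotency in the subspace
        have h1 : c μ ∈ f.genEigenspace μ (Module.finrank ℂ (V j)) := by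
          rw [← Module.End.maxGenEigenspace_eq_genEigenspace_finrank]; exact hμmem
        rw [Module.End.mem_genEigenspace_nat, LinearMap.mem_ker] at h1
        have hfr : Module.finrank ℂ (V j) ≤ n + 1 := by
          have h2 := Submodule.finrank_le (V j)
          rwa [Module.finrank_pi ℂ, Fintype.card_fin] at h2
        have h2 : ((f - μ • (1 : Module.End ℂ (V j))) ^ (n + 1)) (c μ) = 0 := by
          have hsplit : (f - μ • (1 : Module.End ℂ (V j))) ^ (n + 1)
              = (f - μ • 1) ^ (n + 1 - Module.finrank ℂ (V j))
                * (f - μ • 1) ^ (Module.finrank ℂ (V j)) := by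
            rw [← pow_add]
            congr 1
            omega
          rw [hsplit, Module.End.mul_apply, h1, map_zero]
        have h3 := restrict_sub_smul_pow_coe T (V j) (hinv j) μ (n + 1) (c μ)
        rw [h2] at h3
        refine ⟨hne', (c μ).2, ?_, h3.symm⟩
        -- eigenvalue norm via a genuine eigenvector of f
        apply heig j
        have hex : ∃ q : ℕ, ((f - μ • (1 : Module.End ℂ (V j))) ^ q) (c μ) = 0 := ⟨n + 1, h2⟩
        have hq0 : Nat.find hex ≠ 0 := by
          intro h0
          have := Nat.find_spec hex
          rw [h0, pow_zero] at this
          exact hne (by simpa using this)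
        set q := Nat.find hex with hqdef
        have hq1 : q - 1 < q := by omega
        have hy : ((f - μ • (1 : Module.End ℂ (V j))) ^ (q - 1)) (c μ) ≠ 0 :=
          Nat.find_min hex hq1
        have hy2 : (f - μ • (1 : Module.End ℂ (V j)))
            (((f - μ • (1 : Module.End ℂ (V j))) ^ (q - 1)) (c μ)) = 0 := by
          have hfind := Nat.find_spec hex
          rw [← hqdef] at hfind
          rwa [show q = (q - 1) + 1 by omega, pow_succ', Module.End.mul_apply] at hfind
        apply Module.End.hasEigenvalue_of_hasEigenvector
          (x := ((f - μ • (1 : Module.End ℂ (V j))) ^ (q - 1)) (c μ)) (μ := μ)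
        refine ⟨Module.End.mem_eigenspace_iff.mpr ?_, hy⟩
        have := hy2
        rw [LinearMap.sub_apply, LinearMap.smul_apply, Module.End.one_apply, sub_eq_zero] at this
        exact this
      · -- the sum
        have h4 : (((c.sum fun _i xi => xi) : V j) : Fin (n + 1) → ℂ) = w j := by
          rw [hcsum]
        rw [← h4]
        simp [Finsupp.sum]
  choose MM aa hQ hsumM hMempty using hdec
  -- Top block data
  have hM₀ne : (MM j₀).Nonempty := by
    rcases Finset.eq_empty_or_nonempty (MM j₀) with h | h
    · exact absurd (by rw [hsumM j₀, h, Finset.sum_empty]) hj₀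
    · exact h
  set Rr := r j₀ with hRr
  have hRpos : 0 < Rr := hrpos j₀
  set Nop : ℂ → Module.End ℂ (Fin (n + 1) → ℂ) :=
    fun μ => T - μ • (1 : Module.End ℂ (Fin (n + 1) → ℂ)) with hNop
  set dd : ℂ → ℕ := fun μ => Nat.findGreatest (fun d => ((Nop μ) ^ d) (aa j₀ μ) ≠ 0) (n + 1)
    with hdd
  have hdd_spec : ∀ μ ∈ MM j₀, ((Nop μ) ^ (dd μ)) (aa j₀ μ) ≠ 0 := by
    intro μ hμ
    have h0 : ((Nop μ) ^ 0) (aa j₀ μ) ≠ 0 := by simpa using (hQ j₀ μ hμ).1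
    exact Nat.findGreatest_spec (P := fun d => ((Nop μ) ^ d) (aa j₀ μ) ≠ 0)
      (Nat.zero_le _) h0
  have hdd_lt : ∀ μ ∈ MM j₀, dd μ < n + 1 := by
    intro μ hμ
    have hle : dd μ ≤ n + 1 := Nat.findGreatest_le _
    rcases lt_or_eq_of_le hle with h | h
    · exact h
    · exfalso
      have := hdd_spec μ hμ
      rw [h] at this
      exact this (hQ j₀ μ hμ).2.2.2
  have hdd_zero : ∀ μ ∈ MM j₀, ∀ e : ℕ, dd μ < e → ((Nop μ) ^ e) (aa j₀ μ) = 0 := by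
    intro μ hμ e he
    by_cases he2 : e ≤ n + 1
    · by_contra hne
      exact Nat.findGreatest_is_greatest
        (P := fun d => ((Nop μ) ^ d) (aa j₀ μ) ≠ 0) he he2 hne
    · have h0 : ((Nop μ) ^ (n + 1)) (aa j₀ μ) = 0 := (hQ j₀ μ hμ).2.2.2
      rw [show e = (e - (n + 1)) + (n + 1) by omega, pow_add, Module.End.mul_apply, h0, map_zero]
  set D : ℕ := (MM j₀).sup' hM₀ne dd with hD
  have hDlt : D < n + 1 := by
    rw [hD, Finset.sup'_lt_iff]
    exact fun μ hμ => hdd_lt μ hμ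
  have hddD : ∀ μ ∈ MM j₀, dd μ ≤ D := fun μ hμ => Finset.le_sup' dd hμ
  set M₀ : Finset ℂ := (MM j₀).filter (fun μ => dd μ = D) with hM₀
  have hM₀sub : M₀ ⊆ MM j₀ := Finset.filter_subset _ _
  have hM₀ne' : M₀.Nonempty := by
    obtain ⟨μs, hμs, hEq⟩ := Finset.exists_mem_eq_sup' hM₀ne dd
    exact ⟨μs, Finset.mem_filter.mpr ⟨hμs, hEq.symm⟩⟩
  set ev : ℂ → (Fin (n + 1) → ℂ) := fun μ => ((Nop μ) ^ (dd μ)) (aa j₀ μ) with hev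
  have hev_eig : ∀ μ ∈ MM j₀, Module.End.HasEigenvector T μ (ev μ) := by
    intro μ hμ
    refine ⟨Module.End.mem_eigenspace_iff.mpr ?_, hdd_spec μ hμ⟩
    have h0 : ((Nop μ) ^ (dd μ + 1)) (aa j₀ μ) = 0 := hdd_zero μ hμ _ (lt_add_one _)
    rw [pow_succ', Module.End.mul_apply] at h0
    rw [hNop] at h0
    simp only [LinearMap.sub_apply, LinearMap.smul_apply, Module.End.one_apply] at h0
    rw [sub_eq_zero] at h0
    exact h0
  have hev_S : ∀ μ ∈ MM j₀, ev μ ∈ S := by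
    intro μ hμ
    apply Submodule.subset_span
    exact ⟨sub_smul_pow_mem T (V j₀) (hinv j₀) μ (dd μ) (hQ j₀ μ hμ).2.1, μ, hev_eig μ hμ⟩
  -- the dominant part
  set g : ℕ → (Fin (n + 1) → ℂ) :=
    fun m => ∑ μ ∈ M₀, ((m.choose D : ℂ) * μ ^ (m - D)) • ev μ with hg
  have hgS : ∀ m, g m ∈ S := by
    intro m
    exact Submodule.sum_mem _ (fun μ hμ => Submodule.smul_mem _ _ (hev_S μ (hM₀sub hμ)))
  set s : ℕ → ℝ := fun m => (m.choose D : ℝ) * Rr ^ (m - D) with hs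
  have hspos : ∀ m, D ≤ m → 0 < s m := by
    intro m hm
    have : (0 : ℝ) < (m.choose D : ℝ) := by exact_mod_cast Nat.choose_pos hm
    positivity
  -- linear independence and the lower bound
  have hind : LinearIndependent ℂ (fun μ : {x // x ∈ M₀} => ev (μ : ℂ)) :=
    Module.End.eigenvectors_linearIndependent' T (fun μ : {x // x ∈ M₀} => (μ : ℂ))
      Subtype.coe_injective _ (fun μ => hev_eig (μ : ℂ) (hM₀sub μ.2))
  set L : ({x // x ∈ M₀} → ℂ) →ₗ[ℂ] (Fin (n + 1) → ℂ) :=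
    { toFun := fun θ => ∑ μ : {x // x ∈ M₀}, θ μ • ev (μ : ℂ),
      map_add' := fun θ₁ θ₂ => by
        simp only [Pi.add_apply, add_smul]
        rw [Finset.sum_add_distrib],
      map_smul' := fun cθ θ => by
        simp only [Pi.smul_apply, smul_eq_mul, RingHom.id_apply, ← smul_smul]
        rw [Finset.smul_sum] } with hL
  have hker : LinearMap.ker L = ⊥ := by
    rw [LinearMap.ker_eq_bot']
    intro θ hθ
    have h1 := Fintype.linearIndependent_iff.mp hind θ hθ
    funext μ
    exact h1 μ
  obtain ⟨K, hKpos, hKlip⟩ := L.exists_antilipschitzWith hker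
  have hKR : (0 : ℝ) < (K : ℝ) := hKpos
  have hglow : ∀ m, D ≤ m → (K : ℝ)⁻¹ * s m ≤ ‖g m‖ := by
    intro m hm
    set θ : {x // x ∈ M₀} → ℂ := fun μ => (m.choose D : ℂ) * (μ : ℂ) ^ (m - D) with hθ
    have hgL : g m = L θ := by
      rw [hg, hL]
      simp only [LinearMap.coe_mk, AddHom.coe_mk]
      rw [← Finset.sum_coe_sort M₀ (fun μ => ((m.choose D : ℂ) * μ ^ (m - D)) • ev μ)]
    obtain ⟨μs, hμs⟩ := hM₀ne'
    have h1 : ‖θ ⟨μs, hμs⟩‖ ≤ ‖θ‖ := norm_le_pi_norm θ _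
    have h2 : ‖θ ⟨μs, hμs⟩‖ = s m := by
      rw [hθ]
      simp only [norm_mul, norm_pow]
      rw [Complex.norm_natCast]
      have : ‖(μs : ℂ)‖ = Rr := (hQ j₀ μs (hM₀sub hμs)).2.2.1
      rw [this, hs]
    have h3 : ‖θ‖ ≤ (K : ℝ) * ‖L θ‖ := by
      have := hKlip.le_mul_dist θ 0
      simpa [dist_zero_right, map_zero] using this
    rw [hgL]
    rw [inv_mul_le_iff₀ hKR]
    calc s m = ‖θ ⟨μs, hμs⟩‖ := h2.symm
      _ ≤ ‖θ‖ := h1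
      _ ≤ (K : ℝ) * ‖L θ‖ := h3
  -- error terms
  set ee : Fin k → ℂ → ℕ → ℕ → (Fin (n + 1) → ℂ) := fun j μ d m =>
    if j = j₀ ∧ dd μ = D ∧ d = D then 0
    else ((m.choose d : ℂ) * μ ^ (m - d)) • (((Nop μ) ^ d) (aa j μ)) with hee
  have herr_eq : ∀ m : ℕ, n + 1 ≤ m → (T ^ m) v - g m
      = ∑ j : Fin k, ∑ μ ∈ MM j, ∑ d ∈ Finset.range (n + 1), ee j μ d m := by
    intro m hm
    have h1 : (T ^ m) v = ∑ j : Fin k, ∑ μ ∈ MM j, ∑ d ∈ Finset.range (n + 1),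
        ((m.choose d : ℂ) * μ ^ (m - d)) • (((Nop μ) ^ d) (aa j μ)) := by
      rw [hsum, map_sum]
      apply Finset.sum_congr rfl
      intro j _
      rw [hsumM j, map_sum]
      apply Finset.sum_congr rfl
      intro μ hμ
      exact pow_apply_binomial T μ (aa j μ) (n + 1) m hm (hQ j μ hμ).2.2.2
    have h2 : g m = ∑ j : Fin k, ∑ μ ∈ MM j, ∑ d ∈ Finset.range (n + 1),
        (if j = j₀ ∧ dd μ = D ∧ d = D then
          ((m.choose d : ℂ) * μ ^ (m - d)) • (((Nop μ) ^ d) (aa j μ)) else 0) := by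
      rw [Finset.sum_eq_single_of_mem j₀ (Finset.mem_univ j₀)]
      · simp only [hg, hM₀]
        rw [Finset.sum_filter]
        apply Finset.sum_congr rfl
        intro μ hμ
        by_cases hdμ : dd μ = D
        · rw [if_pos hdμ]
          simp only [hev, hdμ, eq_self_iff_true, true_and]
          rw [Finset.sum_ite_eq' (Finset.range (n + 1)) D]
          rw [if_pos (Finset.mem_range.mpr hDlt)]
        · rw [if_neg hdμ]
          symm
          apply Finset.sum_eq_zero
          intro d _
          rw [if_neg (by tauto)]
      · intro j _ hj
        apply Finset.sum_eq_zero
        intro μ _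
        apply Finset.sum_eq_zero
        intro d _
        rw [if_neg (by tauto)]
    rw [h1, h2, ← Finset.sum_sub_distrib]
    apply Finset.sum_congr rfl
    intro j _
    rw [← Finset.sum_sub_distrib]
    apply Finset.sum_congr rfl
    intro μ hμ
    rw [← Finset.sum_sub_distrib]
    apply Finset.sum_congr rfl
    intro d hd
    simp only [hee]
    by_cases hcond : j = j₀ ∧ dd μ = D ∧ d = D
    · rw [if_pos hcond, if_pos hcond, sub_self]
    · rw [if_neg hcond, if_neg hcond, sub_zero]
  -- each error term ratio tends to zero
  have hterm : ∀ j : Fin k, ∀ μ ∈ MM j, ∀ d ∈ Finset.range (n + 1),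
      Tendsto (fun m => ‖ee j μ d m‖ / s m) atTop (𝓝 0) := by
    intro j μ hμ d hd
    by_cases hcond : j = j₀ ∧ dd μ = D ∧ d = D
    · have : ∀ m, ‖ee j μ d m‖ / s m = 0 := by
        intro m
        rw [hee]
        simp [hcond]
      rw [funext this]
      exact tendsto_const_nhds
    · set B : Fin (n + 1) → ℂ := ((Nop μ) ^ d) (aa j μ) with hB
      by_cases hB0 : B = 0
      · have : ∀ m, ‖ee j μ d m‖ / s m = 0 := by
          intro m
          rw [hee]
          simp only [if_neg hcond, ← hB, hB0, smul_zero, norm_zero, zero_div]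
        rw [funext this]
        exact tendsto_const_nhds
      · have heenorm : ∀ m, ‖ee j μ d m‖ = (m.choose d : ℝ) * (r j) ^ (m - d) * ‖B‖ := by
          intro m
          rw [hee]
          simp only [if_neg hcond, ← hB]
          rw [norm_smul, norm_mul, norm_pow, Complex.norm_natCast, (hQ j μ hμ).2.2.1]
        rcases lt_trichotomy j j₀ with hj | hj | hj
        · -- smaller block
          have hmix := tendsto_mixed_ratio (d := d) (D := D) (hrpos j) (hrmono hj)
          have hfe : (fun m : ℕ => ‖ee j μ d m‖ / s m)
              = fun m : ℕ => ((m.choose d : ℝ) * (r j) ^ (m - d)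
                / ((m.choose D : ℝ) * Rr ^ (m - D))) * ‖B‖ := by
            funext m
            rw [heenorm m]
            simp only [hs]
            ring
          rw [hfe]
          simpa using hmix.mul_const ‖B‖
        · -- top block, lower order term
          subst hj
          have hdle : d ≤ dd μ := by
            by_contra hgt
            push_neg at hgt
            exact hB0 (hdd_zero μ hμ d hgt)
          have hdD : d < D := by
            rcases lt_or_eq_of_le (le_trans hdle (hddD μ hμ)) with h | h
            · exact h
            · exfalso
              apply hcond
              refine ⟨rfl, ?_, h⟩
              have := hddD μ hμ
              omega
          have hch := tendsto_choose_div_choose hdD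
          have hfe : ∀ᶠ m : ℕ in atTop, ((m.choose d : ℝ) / (m.choose D)) * (Rr ^ (D - d) * ‖B‖)
              = ‖ee j μ d m‖ / s m := by
            filter_upwards [eventually_ge_atTop (n + 1)] with m hm
            rw [heenorm m]
            simp only [hs]
            have hpow : Rr ^ (m - d) = Rr ^ (m - D) * Rr ^ (D - d) := by
              rw [← pow_add]
              congr 1
              omega
            have hcDpos : (0 : ℝ) < (m.choose D : ℝ) := by
              exact_mod_cast Nat.choose_pos (by omega : D ≤ m)
            have hRpow : (0 : ℝ) < Rr ^ (m - D) := by positivity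
            rw [hpow]
            field_simp
          apply Tendsto.congr' hfe
          simpa using hch.mul_const (Rr ^ (D - d) * ‖B‖)
        · -- larger block: impossible
          exfalso
          have hwj : w j = 0 := hmax j hj
          rw [hMempty j hwj] at hμ
          exact Finset.notMem_empty μ hμ
  -- the error tendsto
  have herr : Tendsto (fun m => ‖(T ^ m) v - g m‖ / s m) atTop (𝓝 0) := by
    have hsum0 : Tendsto (fun m => ∑ j : Fin k, ∑ μ ∈ MM j, ∑ d ∈ Finset.range (n + 1),
        (‖ee j μ d m‖ / s m)) atTop (𝓝 0) := by
      have h0 : (0 : ℝ) = ∑ j : Fin k, ∑ μ ∈ MM j, ∑ d ∈ Finset.range (n + 1), (0 : ℝ) := by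
        simp
      rw [h0]
      apply tendsto_finset_sum
      intro j _
      apply tendsto_finset_sum
      intro μ hμ
      apply tendsto_finset_sum
      intro d hd
      exact hterm j μ hμ d hd
    apply squeeze_zero' _ _ hsum0
    · filter_upwards [eventually_ge_atTop (n + 1)] with m hm
      have := hspos m (by omega)
      positivity
    · filter_upwards [eventually_ge_atTop (n + 1)] with m hm
      rw [herr_eq m hm]
      have hsm := hspos m (by omega)
      rw [div_le_iff₀ hsm]
      calc ‖∑ j : Fin k, ∑ μ ∈ MM j, ∑ d ∈ Finset.range (n + 1), ee j μ d m‖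
          ≤ ∑ j : Fin k, ∑ μ ∈ MM j, ∑ d ∈ Finset.range (n + 1), ‖ee j μ d m‖ := by
            refine le_trans (norm_sum_le _ _) ?_
            apply Finset.sum_le_sum
            intro j _
            refine le_trans (norm_sum_le _ _) ?_
            apply Finset.sum_le_sum
            intro μ _
            exact norm_sum_le _ _
        _ = (∑ j : Fin k, ∑ μ ∈ MM j, ∑ d ∈ Finset.range (n + 1), ‖ee j μ d m‖ / s m) * s m := by
            rw [Finset.sum_mul]
            apply Finset.sum_congr rfl
            intro j _
            rw [Finset.sum_mul]
            apply Finset.sum_congr rfl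
            intro μ _
            rw [Finset.sum_mul]
            apply Finset.sum_congr rfl
            intro d _
            rw [div_mul_cancel₀ _ (ne_of_gt hsm)]
  -- lower bound on ‖T^m v‖
  have hlow : ∀ᶠ m : ℕ in atTop, (K : ℝ)⁻¹ / 2 * s m ≤ ‖(T ^ m) v‖ := by
    have hev2 : ∀ᶠ m : ℕ in atTop, ‖(T ^ m) v - g m‖ / s m < (K : ℝ)⁻¹ / 2 :=
      herr.eventually (gt_mem_nhds (by positivity))
    filter_upwards [hev2, eventually_ge_atTop (n + 1)] with m h1 h2
    have hsm := hspos m (by omega)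
    have h3 : ‖(T ^ m) v - g m‖ ≤ (K : ℝ)⁻¹ / 2 * s m := by
      rw [div_lt_iff₀ hsm] at h1
      linarith
    have h4 : ‖g m‖ ≤ ‖(T ^ m) v‖ + ‖(T ^ m) v - g m‖ := by
      have h := norm_sub_le ((T ^ m) v) ((T ^ m) v - g m)
      simpa [sub_sub_cancel] using h
    have h5 := hglow m (by omega)
    linarith
  -- conclusion
  apply squeeze_zero' (g := fun m => 2 * (K : ℝ) * (‖(T ^ m) v - g m‖ / s m))
  · exact Eventually.of_forall (fun m => Metric.infDist_nonneg)
  · filter_upwards [hlow, eventually_ge_atTop (n + 1)] with m h1 h2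
    have hsm := hspos m (by omega)
    have hTpos : (0 : ℝ) < ‖(T ^ m) v‖ := lt_of_lt_of_le (by positivity) h1
    have hmem : (((‖(T ^ m) v‖ : ℝ) : ℂ)⁻¹ • g m) ∈ (S : Set (Fin (n + 1) → ℂ)) :=
      S.smul_mem _ (hgS m)
    refine le_trans (Metric.infDist_le_dist_of_mem hmem) ?_
    rw [dist_eq_norm, ← smul_sub, norm_smul]
    have hnc : ‖(((‖(T ^ m) v‖ : ℝ) : ℂ))⁻¹‖ = ‖(T ^ m) v‖⁻¹ := by
      rw [norm_inv, Complex.norm_real, norm_norm]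
    rw [hnc]
    have hb1 : ‖(T ^ m) v‖⁻¹ ≤ ((K : ℝ)⁻¹ / 2 * s m)⁻¹ := by
      apply inv_anti₀ (by positivity) h1
    have hb0 : (K : ℝ)⁻¹ / 2 * s m = s m / (2 * (K : ℝ)) := by
      rw [div_mul_eq_mul_div, inv_mul_eq_div, div_div, mul_comm]
    have hb2 : ((K : ℝ)⁻¹ / 2 * s m)⁻¹ * ‖(T ^ m) v - g m‖
        = 2 * (K : ℝ) * (‖(T ^ m) v - g m‖ / s m) := by
      rw [hb0, inv_div, div_mul_eq_mul_div, mul_div_assoc]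
    calc ‖(T ^ m) v‖⁻¹ * ‖(T ^ m) v - g m‖
        ≤ ((K : ℝ)⁻¹ / 2 * s m)⁻¹ * ‖(T ^ m) v - g m‖ :=
          mul_le_mul_of_nonneg_right hb1 (norm_nonneg _)
      _ = 2 * (K : ℝ) * (‖(T ^ m) v - g m‖ / s m) := hb2
  · have hfin := Filter.Tendsto.const_mul (2 * (K : ℝ)) herr
    rw [mul_zero] at hfin
    exact hfin


end AuxiliaryLemmas

/-- Let `γ ∈ PSL(n+1, ℂ)` have a lift `γ̃` whose eigenvalue absolute values are
`r_1 < … < r_k`, giving a decomposition `ℂ^{n+1} = V_1 ⊕ … ⊕ V_k` into `γ̃`-invariant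
subspaces, all eigenvalues of `γ̃` restricted to `V_j` having absolute value `r_j`.
Then for `[v] ∈ ℙⁿ_ℂ` with `v = Σ v_j`, `v_j ∈ V_j`, and `j₀` the largest index with
`v_{j₀} ≠ 0`, every cluster point of `{γᵐ([v])}_{m ∈ ℕ}` lies in the projectivization of
`Eve(γ_{j₀}) \ {0}`, where `Eve(γ_{j₀})` is the span of the eigenvectors of
`γ_{j₀} = r_{j₀}⁻¹ γ̃|_{V_{j₀}}` (equivalently, of the eigenvectors of `γ̃` lying in
`V_{j₀}`). -/
theorem cluster_points_in_eigenspace (n : ℕ) (γt : SpecialLinearGroup (Fin (n + 1)) ℂ)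
    (γ : PSL (n + 1)) (hγ : (QuotientGroup.mk γt : PSL (n + 1)) = γ)
    (k : ℕ) (hk : 0 < k) (r : Fin k → ℝ) (hrpos : ∀ j, 0 < r j) (hrmono : StrictMono r)
    (V : Fin k → Submodule ℂ (Fin (n + 1) → ℂ))
    (hindep : iSupIndep V) (hspan : ⨆ j, V j = ⊤)
    (hinv : ∀ j, ∀ x ∈ V j,
      Matrix.toLin' (γt : Matrix (Fin (n + 1)) (Fin (n + 1)) ℂ) x ∈ V j)
    (heig : ∀ j (μ : ℂ),
      Module.End.HasEigenvalue
        ((Matrix.toLin' (γt : Matrix (Fin (n + 1)) (Fin (n + 1)) ℂ)).restrict (hinv j)) μ →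
      ‖μ‖ = r j)
    (v : Fin (n + 1) → ℂ) (hv : v ≠ 0) (w : Fin k → Fin (n + 1) → ℂ)
    (hw : ∀ j, w j ∈ V j) (hsum : v = ∑ j, w j)
    (j₀ : Fin k) (hj₀ : w j₀ ≠ 0) (hmax : ∀ j, j₀ < j → w j = 0)
    (p : PV (n + 1))
    (hp : MapClusterPt p Filter.atTop fun m : ℕ => γ ^ m • Projectivization.mk ℂ v hv) :
    p.rep ∈ Submodule.span ℂ {u : Fin (n + 1) → ℂ | u ∈ V j₀ ∧ ∃ μ : ℂ,
      Module.End.HasEigenvector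
        (Matrix.toLin' (γt : Matrix (Fin (n + 1)) (Fin (n + 1)) ℂ)) μ u} := by
  classical
  have hcore := core_infDist n k (Matrix.toLin' (γt : Matrix (Fin (n + 1)) (Fin (n + 1)) ℂ))
    r hrpos hrmono V hinv heig v w hw hsum j₀ hj₀ hmax
  set T : (Fin (n + 1) → ℂ) →ₗ[ℂ] (Fin (n + 1) → ℂ) :=
    Matrix.toLin' (γt : Matrix (Fin (n + 1)) (Fin (n + 1)) ℂ) with hT
  set S : Submodule ℂ (Fin (n + 1) → ℂ) := Submodule.span ℂ {u : Fin (n + 1) → ℂ | u ∈ V j₀ ∧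
    ∃ μ : ℂ, Module.End.HasEigenvector T μ u} with hSdef
  -- basic facts about T
  have hTinj : Function.Injective ⇑T := by
    intro x y hxy
    apply (SpecialLinearGroup.toLin' γt).injective
    rw [SpecialLinearGroup.toLin'_apply, SpecialLinearGroup.toLin'_apply]
    exact hxy
  have hTp : ∀ m : ℕ, Function.Injective ⇑(T ^ m) := by
    intro m
    rw [Module.End.coe_pow]
    exact Function.Injective.iterate hTinj m
  have hTm0 : ∀ m : ℕ, (T ^ m) v ≠ 0 := by
    intro m h
    exact hv (hTp m (by rw [h, map_zero]))
  have hnorm0 : ∀ m, ((‖(T ^ m) v‖ : ℝ) : ℂ) ≠ 0 := by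
    intro m
    simpa using norm_ne_zero_iff.mpr (hTm0 m)
  set ξ : ℕ → (Fin (n + 1) → ℂ) :=
    fun m => (((‖(T ^ m) v‖ : ℝ) : ℂ))⁻¹ • ((T ^ m) v) with hξ
  have hξ0 : ∀ m, ξ m ≠ 0 := fun m => smul_ne_zero (inv_ne_zero (hnorm0 m)) (hTm0 m)
  have hξnorm : ∀ m, ‖ξ m‖ = 1 := by
    intro m
    show ‖(((‖(T ^ m) v‖ : ℝ) : ℂ))⁻¹ • ((T ^ m) v)‖ = 1
    rw [norm_smul, norm_inv, Complex.norm_real, norm_norm]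
    exact inv_mul_cancel₀ (norm_ne_zero_iff.mpr (hTm0 m))
  -- identify the projective orbit
  have hγpow : ∀ m : ℕ, γ ^ m = (QuotientGroup.mk (γt ^ m) : PSL (n + 1)) := by
    intro m
    rw [← hγ]
    exact (map_pow (QuotientGroup.mk' (Subgroup.center
      (SpecialLinearGroup (Fin (n + 1)) ℂ))) γt m).symm
  have hSL : ∀ m : ℕ, ∀ x : Fin (n + 1) → ℂ,
      SpecialLinearGroup.toLin' (γt ^ m) x = (T ^ m) x := by
    intro m
    induction m with
    | zero => intro x; simp
    | succ q ih =>
      intro x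
      have h1 : SpecialLinearGroup.toLin' (γt ^ (q + 1)) x
          = SpecialLinearGroup.toLin' (γt ^ q) (SpecialLinearGroup.toLin' γt x) := by
        rw [pow_succ, _root_.map_mul]; rfl
      rw [h1, ih]
      have h2 : SpecialLinearGroup.toLin' γt x = T x := SpecialLinearGroup.toLin'_apply γt x
      rw [h2, pow_succ, Module.End.mul_apply]
  have hmk : ∀ m : ℕ, γ ^ m • Projectivization.mk ℂ v hv
      = Projectivization.mk ℂ (ξ m) (hξ0 m) := by
    intro m
    rw [hγpow m, PSL_mk_smul, SL_smul_mk]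
    rw [Projectivization.mk_eq_mk_iff']
    refine ⟨((‖(T ^ m) v‖ : ℝ) : ℂ), ?_⟩
    show ((‖(T ^ m) v‖ : ℝ) : ℂ) • ((((‖(T ^ m) v‖ : ℝ) : ℂ))⁻¹ • ((T ^ m) v))
      = SpecialLinearGroup.toLin' (γt ^ m) v
    rw [smul_smul, mul_inv_cancel₀ (hnorm0 m), one_smul]
    exact (hSL m v).symm
  simp only [hmk] at hp
  -- lift the cluster point to the unit sphere of nonzero vectors
  set ζ : ℕ → {x : Fin (n + 1) → ℂ // x ≠ 0} := fun m => ⟨ξ m, hξ0 m⟩ with hζ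
  set G : Filter {x : Fin (n + 1) → ℂ // x ≠ 0} :=
    Filter.map ζ Filter.atTop ⊓ Filter.comap (Projectivization.mk' ℂ) (nhds p) with hG
  have hGne : G.NeBot := by
    rw [hG, Filter.inf_neBot_iff]
    intro s hs t ht
    obtain ⟨t', ht', htsub⟩ := Filter.mem_comap.mp ht
    rw [Filter.mem_map, Filter.mem_atTop_sets] at hs
    obtain ⟨N, hN⟩ := hs
    have hfreq := (mapClusterPt_iff_frequently.mp hp) t' ht'
    rw [Filter.frequently_atTop] at hfreq
    obtain ⟨m, hmN, hmt⟩ := hfreq N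
    exact ⟨ζ m, hN m hmN, htsub hmt⟩
  have hsph : IsCompact {x : {x : Fin (n + 1) → ℂ // x ≠ 0} | ‖(x : Fin (n + 1) → ℂ)‖ = 1} := by
    rw [Topology.IsEmbedding.subtypeVal.isCompact_iff]
    have himg : Subtype.val '' {x : {x : Fin (n + 1) → ℂ // x ≠ 0} | ‖(x : Fin (n + 1) → ℂ)‖ = 1}
        = Metric.sphere (0 : Fin (n + 1) → ℂ) 1 := by
      ext y
      simp only [Set.mem_image, Set.mem_setOf_eq, Metric.mem_sphere, dist_zero_right]
      constructor
      · rintro ⟨x, hx, rfl⟩; exact hx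
      · intro hy
        refine ⟨⟨y, ?_⟩, hy, rfl⟩
        intro h0
        rw [h0, norm_zero] at hy
        exact zero_ne_one hy
    rw [himg]
    exact isCompact_sphere 0 1
  have hGsph : G ≤ Filter.principal
      {x : {x : Fin (n + 1) → ℂ // x ≠ 0} | ‖(x : Fin (n + 1) → ℂ)‖ = 1} := by
    refine le_trans inf_le_left ?_
    rw [Filter.le_principal_iff, Filter.mem_map]
    apply Filter.Eventually.of_forall
    intro m
    exact hξnorm m
  haveI := hGne
  obtain ⟨z, hz1, hz⟩ := hsph.exists_clusterPt hGsph
  -- the cluster point projects to p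
  have hmkz : Projectivization.mk' ℂ z = p := by
    have h1 : ClusterPt z (Filter.comap (Projectivization.mk' ℂ) (nhds p)) :=
      hz.mono inf_le_right
    have h3 : (Filter.map (Projectivization.mk' ℂ)
        (nhds z ⊓ Filter.comap (Projectivization.mk' ℂ) (nhds p))).NeBot :=
      Filter.NeBot.map h1 _
    have h4 : Filter.map (Projectivization.mk' ℂ)
        (nhds z ⊓ Filter.comap (Projectivization.mk' ℂ) (nhds p))
        ≤ nhds (Projectivization.mk' ℂ z) ⊓ nhds p := by
      refine le_inf ?_ ?_
      · exact le_trans (Filter.map_mono inf_le_left) ((continuous_PVmk' (n + 1)).tendsto z)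
      · exact le_trans (Filter.map_mono inf_le_right) Filter.map_comap_le
    exact t2_iff_nhds.mp (PV_t2 (n + 1)) (Filter.neBot_of_le h4)
  -- the cluster point lies in S
  have hzS : (z : Fin (n + 1) → ℂ) ∈ S := by
    have hclosed : IsClosed (S : Set (Fin (n + 1) → ℂ)) := Submodule.closed_of_finiteDimensional S
    have hzero : Metric.infDist (z : Fin (n + 1) → ℂ) (S : Set (Fin (n + 1) → ℂ)) = 0 := by
      have hle : ∀ ε : ℝ, 0 < ε →
          Metric.infDist (z : Fin (n + 1) → ℂ) (S : Set (Fin (n + 1) → ℂ)) ≤ 2 * ε := by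
        intro ε hε
        have hev : ∀ᶠ m in Filter.atTop,
            Metric.infDist (ξ m) (S : Set (Fin (n + 1) → ℂ)) < ε :=
          hcore.eventually (gt_mem_nhds hε)
        have h2 : ClusterPt z (Filter.map ζ Filter.atTop) := hz.mono inf_le_left
        have hball : (Subtype.val : {x : Fin (n + 1) → ℂ // x ≠ 0} → (Fin (n + 1) → ℂ)) ⁻¹'
            (Metric.ball (z : Fin (n + 1) → ℂ) ε) ∈ nhds z :=
          (continuous_subtype_val.continuousAt).preimage_mem_nhds
            (Metric.ball_mem_nhds _ hε)
        have hfreq : ∃ᶠ m in Filter.atTop, ζ m ∈ (Subtype.val : {x : Fin (n + 1) → ℂ // x ≠ 0}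
            → (Fin (n + 1) → ℂ)) ⁻¹' (Metric.ball (z : Fin (n + 1) → ℂ) ε) :=
          (mapClusterPt_iff_frequently.mp h2) _ hball
        obtain ⟨m, hm1, hm2⟩ := (hfreq.and_eventually hev).exists
        have hdist : dist (z : Fin (n + 1) → ℂ) (ξ m) < ε := by
          have := hm1
          rw [Set.mem_preimage, Metric.mem_ball] at this
          rw [dist_comm]
          exact this
        calc Metric.infDist (z : Fin (n + 1) → ℂ) (S : Set (Fin (n + 1) → ℂ))
            ≤ Metric.infDist (ξ m) (S : Set (Fin (n + 1) → ℂ))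
              + dist (z : Fin (n + 1) → ℂ) (ξ m) := Metric.infDist_le_infDist_add_dist
          _ ≤ ε + ε := add_le_add hm2.le hdist.le
          _ = 2 * ε := by ring
      have hnonneg := Metric.infDist_nonneg (x := (z : Fin (n + 1) → ℂ))
        (s := (S : Set (Fin (n + 1) → ℂ)))
      by_contra hne
      have hpos : 0 < Metric.infDist (z : Fin (n + 1) → ℂ) (S : Set (Fin (n + 1) → ℂ)) :=
        lt_of_le_of_ne hnonneg (Ne.symm hne)
      have := hle (Metric.infDist (z : Fin (n + 1) → ℂ) (S : Set (Fin (n + 1) → ℂ)) / 4)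
        (by linarith)
      linarith
    have := (hclosed.mem_iff_infDist_zero ⟨0, by simp⟩).mpr hzero
    simpa using this
  -- conclude
  have hrep : Projectivization.mk ℂ p.rep p.rep_nonzero
      = Projectivization.mk ℂ (z : Fin (n + 1) → ℂ) z.2 := by
    rw [Projectivization.mk_rep, ← hmkz, Projectivization.mk'_eq_mk]
  obtain ⟨a, ha⟩ := (Projectivization.mk_eq_mk_iff ℂ _ _ _ _).mp hrep
  rw [← ha]
  exact S.smul_mem _ hzS
end
end
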